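/- arXiv:0812.2800 — 4 statements merged into one kernel-verified Lean document; each statement's English description precedes it below -/
import Mathlib

section
/- The Wehrl entropy of the Fock state |m⟩ equals 1 + m + log(m!) − m·ψ(m+1), i.e., −(1/π)∫_C Q_m(z) log Q_m(z) d²z = 1 + m + log(m!) − m·ψ(m+1), where ψ is the digamma function and Q_m(z) = (|z|^{2m}/m!)e^{-|z|²}. -/
open MeasureTheory Real

section WehrlAux

open Set Filter Asymptotics
open scoped Topology

lemma gammaLog (m : ℕ) :
    ∫ t in Set.Ioi (0:ℝ), t ^ m * Real.exp (-t) * Real.log t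
      = m.factorial * ((harmonic m : ℝ) - Real.eulerMascheroniConstant) := by
  have hre : (0:ℝ) < ((m:ℂ) + 1).re := by simp; positivity
  have h1 := Complex.hasDerivAt_GammaIntegral (s := (m:ℂ) + 1) hre
  have h2 := Complex.hasDerivAt_Gamma_nat m
  have heq : Complex.Gamma =ᶠ[nhds ((m:ℂ) + 1)] Complex.GammaIntegral := by
    have hopen : IsOpen {s : ℂ | 0 < s.re} := isOpen_lt continuous_const Complex.continuous_re
    filter_upwards [hopen.mem_nhds hre] with s hs using Complex.Gamma_eq_integral hs
  have h2' : HasDerivAt Complex.GammaIntegral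
      ((m.factorial : ℂ) * (-Real.eulerMascheroniConstant + (harmonic m : ℂ))) ((m:ℂ) + 1) :=
    h2.congr_of_eventuallyEq heq.symm
  have hD := h2'.unique h1
  have hInt : (∫ t : ℝ in Set.Ioi 0, (t:ℂ) ^ ((m:ℂ) + 1 - 1) * ((Real.log t : ℂ) * (Real.exp (-t) : ℂ)))
      = ((∫ t in Set.Ioi (0:ℝ), t ^ m * Real.exp (-t) * Real.log t : ℝ) : ℂ) := by
    rw [show ((∫ t in Set.Ioi (0:ℝ), t ^ m * Real.exp (-t) * Real.log t : ℝ) : ℂ)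
        = ∫ t in Set.Ioi (0:ℝ), ((t ^ m * Real.exp (-t) * Real.log t : ℝ) : ℂ)
      from integral_ofReal.symm]
    refine setIntegral_congr_fun measurableSet_Ioi (fun t ht => ?_)
    rw [show ((m:ℂ) + 1 - 1) = (m : ℂ) by ring, Complex.cpow_natCast]
    push_cast
    ring
  have hfin : ((∫ t in Set.Ioi (0:ℝ), t ^ m * Real.exp (-t) * Real.log t : ℝ) : ℂ)
      = ((m.factorial * ((harmonic m : ℝ) - Real.eulerMascheroniConstant) : ℝ) : ℂ) := by
    rw [← hInt, ← hD]; push_cast; ring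
  exact_mod_cast hfin

lemma gammaLogIntegrable (m : ℕ) :
    IntegrableOn (fun t => t ^ m * Real.exp (-t) * Real.log t) (Set.Ioi (0:ℝ)) := by
  have hre : (0:ℝ) < ((m:ℂ) + 1).re := by simp; positivity
  have h := (mellin_hasDerivAt_of_isBigO_rpow (E := ℂ) (a := (m:ℝ) + 2) (b := 0)
    (f := fun t => (Real.exp (-t) : ℂ)) (s := (m:ℂ) + 1) ?_ ?_ ?_ ?_ ?_).1
  · have h3 := h.re
    refine IntegrableOn.congr_fun h3 (fun t ht => ?_) measurableSet_Ioi
    simp only [smul_eq_mul]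
    rw [show ((m:ℂ) + 1 - 1) = (m : ℂ) by ring, Complex.cpow_natCast]
    rw [Complex.real_smul]
    rw [show ((t:ℂ) ^ m * ((Real.log t : ℂ) * (Real.exp (-t) : ℂ)))
        = ((t ^ m * Real.exp (-t) * Real.log t : ℝ) : ℂ) by push_cast; ring]
    simp only [RCLike.re_to_complex, Complex.ofReal_re]
  · exact (Complex.continuous_ofReal.comp
      (Real.continuous_exp.comp continuous_neg)).continuousOn.locallyIntegrableOn measurableSet_Ioi
  · rw [← isBigO_norm_left]
    simp_rw [Complex.norm_real, isBigO_norm_left]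
    simpa only [neg_one_mul] using (isLittleO_exp_neg_mul_rpow_atTop zero_lt_one _).isBigO
  · rw [Complex.add_re, Complex.natCast_re, Complex.one_re]; linarith
  · simp_rw [neg_zero, Real.rpow_zero]
    refine isBigO_const_of_tendsto (?_ : Tendsto _ _ (𝓝 (1 : ℂ))) one_ne_zero
    rw [(by simp : (1 : ℂ) = Real.exp (-0))]
    exact (Complex.continuous_ofReal.comp
      (Real.continuous_exp.comp continuous_neg)).continuousWithinAt
  · exact hre

lemma gammaNat (n : ℕ) :
    ∫ t in Set.Ioi (0:ℝ), t ^ n * Real.exp (-t) = n.factorial := by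
  have h := Real.Gamma_eq_integral (s := (n:ℝ) + 1) (by positivity)
  rw [Real.Gamma_nat_eq_factorial] at h
  rw [h]
  refine setIntegral_congr_fun measurableSet_Ioi (fun t ht => ?_)
  rw [show ((n:ℝ) + 1 - 1) = (n:ℝ) by ring, Real.rpow_natCast]
  ring

lemma gammaNatIntegrable (n : ℕ) :
    IntegrableOn (fun t => t ^ n * Real.exp (-t)) (Set.Ioi (0:ℝ)) := by
  have h := Real.GammaIntegral_convergent (s := (n:ℝ) + 1) (by positivity)
  refine IntegrableOn.congr_fun h (fun t ht => ?_) measurableSet_Ioi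
  rw [show ((n:ℝ) + 1 - 1) = (n:ℝ) by ring, Real.rpow_natCast]
  ring

end WehrlAux

/-- The Wehrl entropy of the Fock state `|m⟩` equals
`1 + m + log(m!) - m ψ(m+1)` where `ψ(m+1) = H_m - γ`. -/
theorem wehrl_entropy_fock (m : ℕ) :
    -(1 / π) * ∫ z : ℂ,
        (‖z‖ ^ (2 * m) / (m.factorial : ℝ) * Real.exp (-‖z‖ ^ 2)) *
          Real.log (‖z‖ ^ (2 * m) / (m.factorial : ℝ) * Real.exp (-‖z‖ ^ 2)) =
      1 + m + Real.log (m.factorial : ℝ)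
        - m * ((harmonic m : ℝ) - Real.eulerMascheroniConstant) := by
  have hfac : (0:ℝ) < m.factorial := by exact_mod_cast m.factorial_pos
  set g : ℝ → ℝ := fun t => t ^ m / (m.factorial : ℝ) * Real.exp (-t) *
      Real.log (t ^ m / (m.factorial : ℝ) * Real.exp (-t)) with hgdef
  -- radial reduction
  have hball : (volume (Metric.ball (0:ℂ) 1)).toReal = π := by
    simp [Complex.volume_ball]
  have hrad := integral_fun_norm_addHaar (volume : Measure ℂ)
    (fun r : ℝ => (r ^ (2*m) / (m.factorial:ℝ) * Real.exp (-r^2)) *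
      Real.log (r^(2*m)/(m.factorial:ℝ) * Real.exp (-r^2)))
  rw [Complex.finrank_real_complex, measureReal_def, hball] at hrad
  rw [hrad]
  -- substitution r^2 = t
  have hsub : ∫ x in Set.Ioi (0:ℝ), (|(2:ℝ)| * x ^ ((2:ℝ)-1)) • g (x ^ (2:ℝ))
      = ∫ t in Set.Ioi (0:ℝ), g t := integral_comp_rpow_Ioi g two_ne_zero
  have h2 : (∫ y in Set.Ioi (0:ℝ), y ^ (2-1) •
      ((y ^ (2*m) / (m.factorial:ℝ) * Real.exp (-y^2)) *
        Real.log (y^(2*m)/(m.factorial:ℝ) * Real.exp (-y^2))))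
      = (1/2) * ∫ t in Set.Ioi (0:ℝ), g t := by
    rw [← hsub, ← integral_const_mul]
    refine setIntegral_congr_fun measurableSet_Ioi (fun x hx => ?_)
    have e2 : x ^ ((2:ℝ)) = x^2 := by
      rw [show (2:ℝ) = ((2:ℕ):ℝ) by norm_num, Real.rpow_natCast]
    have e1 : x ^ ((2:ℝ)-1) = x := by norm_num
    simp only [smul_eq_mul, e1, e2, hgdef, pow_mul, abs_two]
    ring
  rw [h2]
  -- split the integral
  have hsplit : ∫ t in Set.Ioi (0:ℝ), g t
      = (m:ℝ)/(m.factorial:ℝ) * (∫ t in Set.Ioi (0:ℝ), t^m * Real.exp (-t) * Real.log t)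
        - Real.log (m.factorial:ℝ) / (m.factorial:ℝ) * (∫ t in Set.Ioi (0:ℝ), t^m * Real.exp (-t))
        - 1/(m.factorial:ℝ) * (∫ t in Set.Ioi (0:ℝ), t^(m+1) * Real.exp (-t)) := by
    have step : ∫ t in Set.Ioi (0:ℝ), g t
        = ∫ t in Set.Ioi (0:ℝ),
            ((m:ℝ)/(m.factorial:ℝ) * (t^m * Real.exp (-t) * Real.log t)
              - Real.log (m.factorial:ℝ) / (m.factorial:ℝ) * (t^m * Real.exp (-t)))
              - 1/(m.factorial:ℝ) * (t^(m+1) * Real.exp (-t)) := by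
      refine setIntegral_congr_fun measurableSet_Ioi (fun t ht => ?_)
      have ht0 : (0:ℝ) < t := ht
      have hlog : Real.log (t^m / (m.factorial:ℝ) * Real.exp (-t))
          = m * Real.log t - Real.log (m.factorial:ℝ) - t := by
        rw [Real.log_mul (by positivity) (Real.exp_ne_zero _),
          Real.log_div (by positivity) (by positivity), Real.log_pow, Real.log_exp]
        ring
      simp only [hgdef, hlog]
      field_simp
      ring
    have iA : IntegrableOn (fun t : ℝ => (m:ℝ)/(m.factorial:ℝ) * (t^m * Real.exp (-t) * Real.log t))
        (Set.Ioi (0:ℝ)) := (gammaLogIntegrable m).const_mul _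
    have iB : IntegrableOn (fun t : ℝ => Real.log (m.factorial:ℝ) / (m.factorial:ℝ) * (t^m * Real.exp (-t)))
        (Set.Ioi (0:ℝ)) := (gammaNatIntegrable m).const_mul _
    have iC : IntegrableOn (fun t : ℝ => 1/(m.factorial:ℝ) * (t^(m+1) * Real.exp (-t)))
        (Set.Ioi (0:ℝ)) := (gammaNatIntegrable (m+1)).const_mul _
    have iAB : IntegrableOn (fun t : ℝ => (m:ℝ)/(m.factorial:ℝ) * (t^m * Real.exp (-t) * Real.log t)
        - Real.log (m.factorial:ℝ) / (m.factorial:ℝ) * (t^m * Real.exp (-t))) (Set.Ioi (0:ℝ)) := iA.sub iB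
    rw [step, integral_sub iAB iC, integral_sub iA iB,
      integral_const_mul, integral_const_mul, integral_const_mul]
  rw [hsplit, gammaLog m, gammaNat m, gammaNat (m+1)]
  have hπ : (π:ℝ) ≠ 0 := Real.pi_ne_zero
  have hfacsucc : ((m+1).factorial : ℝ) = (m+1) * m.factorial := by
    rw [Nat.factorial_succ]; push_cast; ring
  rw [hfacsucc]
  simp only [nsmul_eq_mul, smul_eq_mul, Nat.cast_ofNat]
  field_simp
  ring
end

section
/- The non-Gaussianity of the Fock state, N(m) = log(m+1) − m − log(m!) + m·ψ(m+1) with ψ(m+1) = H_m − γ, is nonnegative for all nonnegative integers m, and equals 0 when m = 0. -/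
open Real Filter

/-- Key integral inequality: `1/(m+1) ≤ log(m+3/2) - log(m+1/2)`. -/
lemma key_log_gap (m : ℕ) :
    (1 : ℝ) / (m + 1) ≤ Real.log (m + 3/2) - Real.log (m + 1/2) := by
  set a : ℝ := m + 1/2 with ha_def
  set b : ℝ := m + 3/2 with hb_def
  set c : ℝ := m + 1 with hc_def
  have hm : (0:ℝ) ≤ m := Nat.cast_nonneg m
  have ha : 0 < a := by positivity
  have hb : 0 < b := by positivity
  have hc : 0 < c := by positivity
  have hab : a ≤ b := by rw [ha_def, hb_def]; linarith
  have hint : Real.log b - Real.log a = ∫ x in a..b, x⁻¹ := by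
    rw [integral_inv_of_pos ha hb, Real.log_div (ne_of_gt hb) (ne_of_gt ha)]
  have hcont : Continuous (fun x : ℝ => 2/c - x/c^2) := by continuity
  have hderiv : ∀ x ∈ Set.uIcc a b,
      HasDerivAt (fun y : ℝ => 2/c*y - y^2/(2*c^2)) (2/c - x/c^2) x := by
    intro x _
    have h1 : HasDerivAt (fun y : ℝ => 2/c*y) (2/c) x := by
      simpa using (hasDerivAt_id x).const_mul (2/c)
    have h2 : HasDerivAt (fun y : ℝ => y^2/(2*c^2)) (2*x/(2*c^2)) x := by
      simpa using (hasDerivAt_pow 2 x).div_const (2*c^2)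
    have := h1.sub h2
    refine this.congr_deriv ?_
    field_simp
  have hval : (∫ x in a..b, (2/c - x/c^2))
      = (2/c*b - b^2/(2*c^2)) - (2/c*a - a^2/(2*c^2)) :=
    intervalIntegral.integral_eq_sub_of_hasDerivAt hderiv (hcont.intervalIntegrable a b)
  have hlow : ∫ x in a..b, (2/c - x/c^2) ≤ ∫ x in a..b, x⁻¹ := by
    apply intervalIntegral.integral_mono_on hab (hcont.intervalIntegrable a b)
    · apply intervalIntegral.intervalIntegrable_inv
      · intro x hx
        rw [Set.uIcc_of_le hab] at hx
        exact ne_of_gt (lt_of_lt_of_le ha hx.1)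
      · exact continuousOn_id
    · intro x hx
      have hx0 : 0 < x := lt_of_lt_of_le ha hx.1
      rw [div_sub_div _ _ (ne_of_gt hc) (by positivity), inv_eq_one_div,
        div_le_div_iff₀ (by positivity) hx0]
      nlinarith [sq_nonneg (x - c)]
  have hrhs : (2/c*b - b^2/(2*c^2)) - (2/c*a - a^2/(2*c^2)) = 1 / (m + 1) := by
    rw [ha_def, hb_def, hc_def]
    have : ((m:ℝ) + 1) ≠ 0 := by positivity
    field_simp
    ring
  rw [hint]
  rw [hval, hrhs] at hlow
  exact hlow

/-- The sequence `harmonic m - log (m + 1/2)` is antitone. -/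
lemma antitone_d : Antitone (fun m : ℕ => (harmonic m : ℝ) - Real.log (m + 1/2)) := by
  apply antitone_nat_of_succ_le
  intro m
  have h := key_log_gap m
  have hh : ((harmonic (m+1) : ℚ) : ℝ) = (harmonic m : ℝ) + 1/(m+1) := by
    rw [harmonic_succ]
    push_cast
    ring
  simp only [hh]
  push_cast
  have : ((m:ℝ) + 1 + 1/2) = (m:ℝ) + 3/2 := by ring
  rw [this]
  linarith

lemma tendsto_d : Tendsto (fun m : ℕ => (harmonic m : ℝ) - Real.log (m + 1/2)) atTop
    (nhds Real.eulerMascheroniConstant) := by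
  have h1 : Tendsto (fun m : ℕ => (harmonic m : ℝ) - Real.log (m + 1)) atTop
      (nhds Real.eulerMascheroniConstant) := Real.tendsto_harmonic_sub_log_add_one
  have h2 : Tendsto (fun m : ℕ => Real.log ((m + 1) / (m + 1/2))) atTop (nhds 0) := by
    have hq : Tendsto (fun m : ℕ => ((m:ℝ) + 1) / ((m:ℝ) + 1/2)) atTop (nhds 1) := by
      have := Filter.Tendsto.comp
        (f := fun m : ℕ => (m:ℝ)) (g := fun x : ℝ => (x + 1) / (x + 1/2))
        (y := atTop) (x := atTop) (z := nhds 1) ?_ tendsto_natCast_atTop_atTop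
      · exact this
      · have : (fun x : ℝ => (x + 1) / (x + 1/2)) =ᶠ[atTop]
            (fun x : ℝ => 1 + (1/2) / (x + 1/2)) := by
          filter_upwards [eventually_gt_atTop (0:ℝ)] with x hx
          field_simp
          ring
        rw [tendsto_congr' this]
        have : Tendsto (fun x : ℝ => (1/2) / (x + 1/2)) atTop (nhds 0) := by
          apply Tendsto.div_atTop tendsto_const_nhds
          exact tendsto_atTop_add_const_right _ _ tendsto_id
        have := this.const_add (1:ℝ)
        simpa using this
    have hlog : ContinuousAt Real.log 1 := Real.continuousAt_log one_ne_zero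
    have := hlog.tendsto.comp hq
    simpa [Function.comp_def] using this
  have key : ∀ m : ℕ, (harmonic m : ℝ) - Real.log (m + 1/2)
      = ((harmonic m : ℝ) - Real.log (m + 1)) + Real.log ((m + 1) / (m + 1/2)) := by
    intro m
    have hm : (0:ℝ) ≤ m := Nat.cast_nonneg m
    rw [Real.log_div (by positivity) (by positivity)]
    ring
  simp only [key]
  have := h1.add h2
  simpa using this

lemma gamma_le_d (m : ℕ) :
    Real.eulerMascheroniConstant ≤ (harmonic m : ℝ) - Real.log (m + 1/2) :=
  le_of_tendsto tendsto_d (by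
    filter_upwards [eventually_ge_atTop m] with n hn
    exact antitone_d hn)

/-- The increment is nonnegative. -/
lemma delta_nonneg (m : ℕ) :
    0 ≤ Real.log (m + 2) - 2 * Real.log (m + 1) + (harmonic m : ℝ)
      - Real.eulerMascheroniConstant := by
  have hm : (0:ℝ) ≤ m := Nat.cast_nonneg m
  have h1 : 2 * Real.log ((m:ℝ) + 1) ≤ Real.log ((m:ℝ) + 2) + Real.log ((m:ℝ) + 1/2) := by
    have : Real.log (((m:ℝ) + 1)^2) ≤ Real.log (((m:ℝ) + 2) * ((m:ℝ) + 1/2)) := by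
      apply Real.log_le_log (by positivity)
      nlinarith
    rwa [Real.log_pow, Real.log_mul (by positivity) (by positivity)] at this
  have h2 := gamma_le_d m
  push_cast at h1 ⊢
  linarith

/-- The non-Gaussianity `N(m) = log(m+1) - m - log(m!) + m(H_m - γ)` of the
Fock state is nonnegative for all `m`, and equals `0` for `m = 0`. -/
theorem fock_nonGaussianity_nonneg :
    (∀ m : ℕ, 0 ≤ Real.log (m + 1) - m - Real.log (m.factorial : ℝ)
        + m * ((harmonic m : ℝ) - Real.eulerMascheroniConstant)) ∧
    Real.log ((0 : ℕ) + 1) - (0 : ℕ) - Real.log ((0 : ℕ).factorial : ℝ)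
        + (0 : ℕ) * ((harmonic 0 : ℝ) - Real.eulerMascheroniConstant) = 0 := by
  constructor
  · intro m
    induction m with
    | zero => simp
    | succ n ih =>
      have hn1 : ((n:ℝ) + 1) ≠ 0 := by positivity
      have hfact : Real.log ((n+1).factorial : ℝ)
          = Real.log (n.factorial : ℝ) + Real.log (n + 1) := by
        rw [Nat.factorial_succ]
        push_cast
        rw [Real.log_mul (by positivity) (by positivity)]
        ring
      have hharm : ((harmonic (n+1) : ℚ) : ℝ) = (harmonic n : ℝ) + 1/(n+1) := by
        rw [harmonic_succ]; push_cast; ring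
      have hd := delta_nonneg n
      have key : Real.log ((n+1 : ℕ) + 1) - ((n+1 : ℕ) : ℝ) - Real.log ((n+1).factorial : ℝ)
          + ((n+1 : ℕ) : ℝ) * ((harmonic (n+1) : ℝ) - Real.eulerMascheroniConstant)
          = (Real.log (n + 1) - n - Real.log (n.factorial : ℝ)
              + n * ((harmonic n : ℝ) - Real.eulerMascheroniConstant))
            + (Real.log (n + 2) - 2 * Real.log (n + 1) + (harmonic n : ℝ)
              - Real.eulerMascheroniConstant) := by
        rw [hfact, hharm]
        push_cast
        field_simp
        ring
      push_cast at key ⊢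
      linarith [ih, hd, key.ge, key.le]
  · simp
end

section
/- The Fock-state non-Gaussianity N(m) = log(m+1) − m − log(m!) + m(H_m − γ) is strictly increasing in m. -/
open Real Filter Finset Topology

private lemma exp_aux {x : ℝ} (hx : 0 < x) (hx2 : x ≤ 1/2) :
    Real.exp x ≤ (2 + x) / (2 - x) := by
  have hb := Real.exp_bound (x := -x)
    (by rw [abs_neg, abs_of_pos hx]; linarith) (n := 4) (by norm_num)
  have hs : ∑ m ∈ Finset.range 4, (-x) ^ m / m.factorial
      = 1 - x + x^2/2 - x^3/6 := by
    simp [Finset.sum_range_succ, Nat.factorial]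
    ring
  rw [hs, abs_neg, abs_of_pos hx] at hb
  have h1 : 1 - x + x^2/2 - x^3/6 - x^4 * (5/96) ≤ Real.exp (-x) := by
    have h := (abs_sub_le_iff.1 hb).2
    norm_num [Nat.factorial] at h ⊢
    linarith
  have h2 : (2 - x) / (2 + x) ≤ Real.exp (-x) := by
    rw [div_le_iff₀ (by linarith)]
    nlinarith [pow_pos hx 3, pow_pos hx 4, pow_pos hx 5]
  have h2' : (0:ℝ) < (2 - x) / (2 + x) := div_pos (by linarith) (by linarith)
  rw [Real.exp_neg] at h2
  calc Real.exp x = ((Real.exp x)⁻¹)⁻¹ := by rw [inv_inv]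
    _ ≤ ((2 - x) / (2 + x))⁻¹ := by
        exact inv_anti₀ h2' h2
    _ = (2 + x) / (2 - x) := by rw [inv_div]

private lemma log_step (m : ℕ) (hm : 1 ≤ m) :
    (1:ℝ)/(m+1) ≤ Real.log ((m:ℝ) + 1 + 1/2) - Real.log ((m:ℝ) + 1/2) := by
  have hm1 : (1:ℝ) ≤ (m:ℝ) := by exact_mod_cast hm
  set x : ℝ := 1/((m:ℝ)+1) with hxdef
  have hx : 0 < x := by positivity
  have hx2 : x ≤ 1/2 := by
    rw [hxdef, div_le_div_iff₀ (by linarith) (by norm_num)]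
    linarith
  have h := exp_aux hx hx2
  have hratio : (2 + x)/(2 - x) = ((m:ℝ) + 1 + 1/2)/((m:ℝ) + 1/2) := by
    rw [hxdef, div_eq_div_iff (by rw [← hxdef]; linarith) (by positivity)]
    have hne : ((m:ℝ) + 1) ≠ 0 := by positivity
    field_simp
    ring
  rw [hratio] at h
  have hlog := Real.log_le_log (Real.exp_pos x) h
  rw [Real.log_exp, Real.log_div (by positivity) (by positivity)] at hlog
  exact hlog

private noncomputable def g (m : ℕ) : ℝ := (harmonic m : ℝ) - Real.log ((m:ℝ) + 1/2)

private lemma g_anti {m k : ℕ} (hm : 1 ≤ m) (hk : m ≤ k) : g k ≤ g m := by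
  induction k, hk using Nat.le_induction with
  | base => exact le_rfl
  | succ k hk ih =>
    refine le_trans ?_ ih
    have hstep := log_step k (le_trans hm hk)
    simp only [g, harmonic_succ]
    push_cast
    have hinv : ((k:ℝ)+1)⁻¹ = 1/((k:ℝ)+1) := (one_div _).symm
    rw [hinv]
    linarith

private lemma tendsto_g : Tendsto g atTop (𝓝 Real.eulerMascheroniConstant) := by
  have h1 : Tendsto (fun m : ℕ => Real.eulerMascheroniSeq m) atTop
      (𝓝 Real.eulerMascheroniConstant) := Real.tendsto_eulerMascheroniSeq
  have h2 : Tendsto (fun m : ℕ => Real.log (((m:ℝ) + 1)/((m:ℝ) + 1/2))) atTop (𝓝 0) := by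
    have hr : Tendsto (fun m : ℕ => ((m:ℝ) + 1)/((m:ℝ) + 1/2)) atTop (𝓝 1) := by
      have heq : ∀ m : ℕ, ((m:ℝ) + 1)/((m:ℝ) + 1/2) = 1 + (1/2)/((m:ℝ) + 1/2) := by
        intro m
        have : ((m:ℝ) + 1/2) ≠ 0 := by positivity
        field_simp
        ring
      simp_rw [heq]
      have : Tendsto (fun m : ℕ => (1/2:ℝ)/((m:ℝ) + 1/2)) atTop (𝓝 0) := by
        apply Tendsto.div_atTop tendsto_const_nhds
        exact tendsto_atTop_add_const_right _ _ tendsto_natCast_atTop_atTop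
      simpa using (tendsto_const_nhds (x := (1:ℝ))).add this
    have := (Real.continuousAt_log one_ne_zero).tendsto.comp hr
    rw [Real.log_one] at this
    exact this
  have heq : ∀ m : ℕ, g m = Real.eulerMascheroniSeq m
      + Real.log (((m:ℝ) + 1)/((m:ℝ) + 1/2)) := by
    intro m
    rw [g, Real.eulerMascheroniSeq, Real.log_div (by positivity) (by positivity)]
    ring
  rw [show g = fun m : ℕ => Real.eulerMascheroniSeq m
      + Real.log (((m:ℝ) + 1)/((m:ℝ) + 1/2)) from funext heq]
  simpa using h1.add h2

private lemma gamma_le_g (m : ℕ) (hm : 1 ≤ m) : Real.eulerMascheroniConstant ≤ g m :=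
  le_of_tendsto tendsto_g (eventually_atTop.2 ⟨m, fun _ hk => g_anti hm hk⟩)

/-- The Fock-state non-Gaussianity
`N(m) = log(m+1) - m - log(m!) + m(H_m - γ)` is strictly increasing in `m`. -/
theorem fock_nonGaussianity_strictMono :
    StrictMono (fun m : ℕ =>
      Real.log (m + 1) - m - Real.log (m.factorial : ℝ)
        + m * ((harmonic m : ℝ) - Real.eulerMascheroniConstant)) := by
  apply strictMono_nat_of_lt_succ
  intro n
  have hfact : Real.log ((n+1).factorial : ℝ)
      = Real.log ((n:ℝ) + 1) + Real.log (n.factorial : ℝ) := by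
    rw [Nat.factorial_succ, Nat.cast_mul, Real.log_mul (by positivity)
      (by exact_mod_cast Nat.cast_ne_zero.2 n.factorial_ne_zero)]
    push_cast
    ring
  have hharm : ((harmonic (n+1) : ℚ) : ℝ) = (harmonic n : ℝ) + 1/((n:ℝ)+1) := by
    rw [harmonic_succ]
    push_cast
    ring
  push_cast
  rw [hfact, hharm]
  -- reduce to: 0 < log(n+2) - 2 log(n+1) + H_n - γ
  have key : 2 * Real.log ((n:ℝ) + 1)
      < Real.log ((n:ℝ) + 1 + 1) + ((harmonic n : ℝ) - Real.eulerMascheroniConstant) := by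
    rcases Nat.eq_zero_or_pos n with rfl | hn
    · -- n = 0 : need 0 < log 2 - γ, since γ < 2/3 < log 2
      have hγ : Real.eulerMascheroniConstant < 2/3 :=
        Real.eulerMascheroniConstant_lt_two_thirds
      have hlog2 : (2:ℝ)/3 < Real.log 2 := by
        rw [← Real.exp_lt_exp, Real.exp_log two_pos]
        have hcube : Real.exp (2/3) ^ 3 = Real.exp 1 ^ 2 := by
          rw [← Real.exp_nat_mul, ← Real.exp_nat_mul]
          norm_num
        have h8 : Real.exp (2/3) ^ 3 < 8 := by
          rw [hcube]
          nlinarith [Real.exp_one_lt_d9, Real.exp_pos (1:ℝ)]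
        by_contra hle
        push_neg at hle
        have : (2:ℝ)^3 ≤ Real.exp (2/3) ^ 3 :=
          pow_le_pow_left₀ (by norm_num) hle 3
        norm_num at this
        linarith
      simp only [Nat.cast_zero, harmonic_zero, Rat.cast_zero]
      norm_num
      linarith
    · have h1 := gamma_le_g n hn
      have h2 : Real.log (((n:ℝ) + 1)^2) < Real.log (((n:ℝ) + 1/2) * ((n:ℝ) + 2)) := by
        apply Real.log_lt_log (by positivity)
        nlinarith [(by exact_mod_cast hn : (1:ℝ) ≤ (n:ℝ))]
      rw [Real.log_pow, Real.log_mul (by positivity) (by positivity)] at h2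
      simp only [g] at h1
      push_cast at h2
      have : Real.log ((n:ℝ) + 1 + 1) = Real.log ((n:ℝ) + 2) := by ring_nf
      rw [this]
      linarith
  have hne : ((n:ℝ) + 1) ≠ 0 := by positivity
  field_simp
  nlinarith [key]
end

section
/- The Wehrl entropy of the photon-added thermal state differs from that of the Fock state by log(1−x): −(1/π)∫ Q^{(m,x)} log Q^{(m,x)} d²z = [1 + m + log(m!) − m·ψ(m+1)] − log(1−x), where Q^{(m,x)}(z) = ((1−x)^{m+1}/m!)|z|^{2m}e^{−(1−x)|z|²}. -/
open MeasureTheory Real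

open Set Filter Asymptotics in
private lemma gammaLog_value (m : ℕ) :
    ∫ t in Ioi (0:ℝ), t ^ m * Real.exp (-t) * Real.log t
      = m.factorial * (-Real.eulerMascheroniConstant + (harmonic m : ℝ)) := by
  have hre : (0:ℝ) < ((m:ℂ) + 1).re := by simp; positivity
  have h1 := Complex.hasDerivAt_GammaIntegral (s := (m:ℂ) + 1) hre
  have h2 := Complex.hasDerivAt_Gamma_nat m
  have heq : Complex.Gamma =ᶠ[nhds ((m:ℂ)+1)] Complex.GammaIntegral := by
    filter_upwards [IsOpen.mem_nhds (isOpen_lt continuous_const Complex.continuous_re) hre]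
      with s hs
    exact Complex.Gamma_eq_integral hs
  have h2' : HasDerivAt Complex.GammaIntegral
      ((m.factorial : ℂ) * (-Real.eulerMascheroniConstant + (harmonic m : ℝ))) ((m:ℂ)+1) :=
    h2.congr_of_eventuallyEq heq.symm
  have hval := h1.unique h2'
  have hint : (∫ t : ℝ in Ioi 0, (t:ℂ) ^ ((m:ℂ) + 1 - 1) * (Real.log t * Real.exp (-t)))
      = ((∫ t in Ioi (0:ℝ), t ^ m * Real.exp (-t) * Real.log t : ℝ) : ℂ) := by
    have hcg : ∀ t ∈ Ioi (0:ℝ), (t:ℂ) ^ ((m:ℂ) + 1 - 1) * (Real.log t * Real.exp (-t))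
        = (((t ^ m * Real.exp (-t) * Real.log t : ℝ)) : ℂ) := by
      intro t ht
      rw [add_sub_cancel_right, Complex.cpow_natCast]
      push_cast
      ring
    rw [setIntegral_congr_fun measurableSet_Ioi hcg]
    exact integral_ofReal
  rw [hint] at hval
  exact_mod_cast hval

open Set Filter Asymptotics in
private lemma gammaLog_integrable (m : ℕ) :
    IntegrableOn (fun t : ℝ => t ^ m * Real.exp (-t) * Real.log t) (Ioi 0) := by
  have hre : (0:ℝ) < ((m:ℂ) + 1).re := by simp; positivity
  have hmc : MellinConvergent (fun t => Real.log t • ((Real.exp (-t) : ℝ) : ℂ)) ((m:ℂ)+1) := by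
    refine (mellin_hasDerivAt_of_isBigO_rpow (E := ℂ) ?_ ?_ (lt_add_one _) ?_ hre).1
    · refine (Continuous.continuousOn ?_).locallyIntegrableOn measurableSet_Ioi
      exact Complex.continuous_ofReal.comp (Real.continuous_exp.comp continuous_neg)
    · rw [← isBigO_norm_left]
      simp_rw [Complex.norm_real, isBigO_norm_left]
      simpa only [neg_one_mul] using (isLittleO_exp_neg_mul_rpow_atTop zero_lt_one _).isBigO
    · simp_rw [neg_zero, Real.rpow_zero]
      refine isBigO_const_of_tendsto (?_ : Tendsto _ _ (nhds (1 : ℂ))) one_ne_zero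
      rw [(by simp : (1 : ℂ) = Real.exp (-0))]
      exact (Complex.continuous_ofReal.comp
        (Real.continuous_exp.comp continuous_neg)).continuousWithinAt
  have h2 : IntegrableOn
      (fun t : ℝ => (((t ^ m * Real.exp (-t) * Real.log t : ℝ)) : ℂ)) (Ioi 0) := by
    refine hmc.congr_fun (fun t ht => ?_) measurableSet_Ioi
    beta_reduce
    rw [add_sub_cancel_right, Complex.cpow_natCast]
    simp only [Complex.real_smul, smul_eq_mul]
    push_cast
    ring
  have h3 := h2.re
  refine (integrableOn_congr_fun (fun t ht => ?_) measurableSet_Ioi).mp h3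
  exact (Complex.ofReal_re _).symm

open Set in
private lemma gammaPow_value (k : ℕ) :
    ∫ t in Ioi (0:ℝ), t ^ k * Real.exp (-t) = k.factorial := by
  have h := Real.Gamma_eq_integral (s := (k:ℝ) + 1) (by positivity)
  rw [Real.Gamma_nat_eq_factorial] at h
  rw [h]
  refine setIntegral_congr_fun measurableSet_Ioi (fun t ht => ?_)
  rw [add_sub_cancel_right, Real.rpow_natCast]
  ring

open Set in
private lemma gammaPow_integrable (k : ℕ) :
    IntegrableOn (fun t : ℝ => t ^ k * Real.exp (-t)) (Ioi 0) := by
  have h := Real.GammaIntegral_convergent (s := (k:ℝ) + 1) (by positivity)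
  refine (integrableOn_congr_fun (fun t ht => ?_) measurableSet_Ioi).mpr h
  rw [add_sub_cancel_right, Real.rpow_natCast]
  ring

/-- The Wehrl entropy of the photon-added thermal state differs from that of
the Fock state by `log(1-x)`. -/
theorem wehrl_entropy_pats (m : ℕ) (x : ℝ) (hx0 : 0 ≤ x) (hx1 : x < 1) :
    -(1 / π) * ∫ z : ℂ,
        ((1 - x) ^ (m + 1) / (m.factorial : ℝ) * ‖z‖ ^ (2 * m)
            * Real.exp (-(1 - x) * ‖z‖ ^ 2)) *
          Real.log ((1 - x) ^ (m + 1) / (m.factorial : ℝ) * ‖z‖ ^ (2 * m)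
            * Real.exp (-(1 - x) * ‖z‖ ^ 2)) =
      (1 + m + Real.log (m.factorial : ℝ)
          - m * ((harmonic m : ℝ) - Real.eulerMascheroniConstant))
        - Real.log (1 - x) := by
  classical
  set c : ℝ := 1 - x with hc_def
  have hc : 0 < c := by simp [hc_def]; linarith
  have hm : (0:ℝ) < m.factorial := by exact_mod_cast m.factorial_pos
  -- radial profile
  set F : ℝ → ℝ := fun y =>
    (c ^ (m + 1) / (m.factorial : ℝ) * y ^ (2 * m) * Real.exp (-c * y ^ 2)) *
      Real.log (c ^ (m + 1) / (m.factorial : ℝ) * y ^ (2 * m) * Real.exp (-c * y ^ 2))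
    with hF_def
  -- the t-space integrand
  set g : ℝ → ℝ := fun t =>
    (c / (m.factorial : ℝ) * t ^ m * Real.exp (-t)) *
      Real.log (c / (m.factorial : ℝ) * t ^ m * Real.exp (-t)) with hg_def
  -- Step 1: reduce to radial integral
  have step1 : (∫ z : ℂ, F ‖z‖) = 2 * (π * ∫ y in Set.Ioi (0:ℝ), y * F y) := by
    have h := MeasureTheory.integral_fun_norm_addHaar (volume : Measure ℂ) F
    rw [h]
    simp only [Complex.finrank_real_complex, measureReal_def, Complex.volume_ball]
    norm_num [ENNReal.toReal_mul, smul_eq_mul, ← integral_const_mul]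
  -- Step 2: substitution t = c y ^ 2
  have himg : (fun y : ℝ => c * y ^ 2) '' Set.Ioi 0 = Set.Ioi 0 := by
    ext t
    simp only [Set.mem_image, Set.mem_Ioi]
    constructor
    · rintro ⟨y, hy, rfl⟩; positivity
    · intro ht
      refine ⟨Real.sqrt (t / c), Real.sqrt_pos.mpr (by positivity), ?_⟩
      rw [Real.sq_sqrt (le_of_lt (by positivity : (0:ℝ) < t / c))]
      field_simp
  have hderiv : ∀ y ∈ Set.Ioi (0:ℝ),
      HasDerivWithinAt (fun y : ℝ => c * y ^ 2) (2 * c * y) (Set.Ioi 0) y := by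
    intro y hy
    have h := (hasDerivAt_pow 2 y).const_mul c
    have h2 : HasDerivAt (fun y : ℝ => c * y ^ 2) (2 * c * y) y := by
      exact h.congr_deriv (by ring)
    exact h2.hasDerivWithinAt
  have hinj : Set.InjOn (fun y : ℝ => c * y ^ 2) (Set.Ioi 0) := by
    intro a ha b hb hab
    have ha' : (0:ℝ) < a := ha
    have hb' : (0:ℝ) < b := hb
    have hsq : a ^ 2 = b ^ 2 := mul_left_cancel₀ hc.ne' hab
    nlinarith [sq_nonneg (a - b), sq_nonneg (a + b)]
  have step2 : (∫ t in Set.Ioi (0:ℝ), g t)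
      = ∫ y in Set.Ioi (0:ℝ), |2 * c * y| • g (c * y ^ 2) := by
    have h := integral_image_eq_integral_abs_deriv_smul measurableSet_Ioi hderiv hinj g
    rw [himg] at h
    exact h
  -- relate y-integrand to g
  have hrel : ∀ y ∈ Set.Ioi (0:ℝ), y * F y = (1 / (2 * c)) * (|2 * c * y| • g (c * y ^ 2)) := by
    intro y hy
    have hy' : (0:ℝ) < y := hy
    have habs : |2 * c * y| = 2 * c * y := abs_of_pos (by positivity)
    have hQ : c / (m.factorial : ℝ) * (c * y ^ 2) ^ m * Real.exp (-(c * y ^ 2))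
        = c ^ (m + 1) / (m.factorial : ℝ) * y ^ (2 * m) * Real.exp (-c * y ^ 2) := by
      rw [mul_pow, pow_mul, pow_succ]
      ring_nf
    simp only [hF_def, hg_def, smul_eq_mul, habs, hQ]
    field_simp
  have step2' : (∫ y in Set.Ioi (0:ℝ), y * F y)
      = (1 / (2 * c)) * ∫ t in Set.Ioi (0:ℝ), g t := by
    rw [setIntegral_congr_fun measurableSet_Ioi hrel, integral_const_mul, ← step2]
  -- Step 3: compute ∫ g
  have hpt : ∀ t ∈ Set.Ioi (0:ℝ), g t
      = c / (m.factorial : ℝ) *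
          (Real.log (c / (m.factorial : ℝ)) * (t ^ m * Real.exp (-t))
            + ((m : ℝ) * (t ^ m * Real.exp (-t) * Real.log t)
              - t ^ (m + 1) * Real.exp (-t))) := by
    intro t ht
    have ht' : (0:ℝ) < t := ht
    have h1 : c / (m.factorial : ℝ) * t ^ m ≠ 0 := by positivity
    have h2 : Real.exp (-t) ≠ 0 := (Real.exp_pos _).ne'
    simp only [hg_def]
    rw [Real.log_mul h1 h2, Real.log_mul (by positivity) (by positivity : (t:ℝ)^m ≠ 0),
      Real.log_exp, Real.log_pow]
    push_cast
    ring
  have hint1 := gammaPow_integrable m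
  have hint2 := gammaLog_integrable m
  have hint3 := gammaPow_integrable (m + 1)
  have hg_val : (∫ t in Set.Ioi (0:ℝ), g t)
      = c / (m.factorial : ℝ) *
          (Real.log (c / (m.factorial : ℝ)) * (m.factorial : ℝ)
            + ((m : ℝ) * ((m.factorial : ℝ) * (-Real.eulerMascheroniConstant + (harmonic m : ℝ)))
              - ((m + 1).factorial : ℝ))) := by
    have hint1' : Integrable (fun t : ℝ =>
        Real.log (c / (m.factorial : ℝ)) * (t ^ m * Real.exp (-t)))
        (volume.restrict (Set.Ioi 0)) := hint1.const_mul _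
    have hint2' : Integrable (fun t : ℝ =>
        (m : ℝ) * (t ^ m * Real.exp (-t) * Real.log t)) (volume.restrict (Set.Ioi 0)) :=
      hint2.const_mul _
    have hint23 : Integrable (fun t : ℝ =>
        (m : ℝ) * (t ^ m * Real.exp (-t) * Real.log t) - t ^ (m + 1) * Real.exp (-t))
        (volume.restrict (Set.Ioi 0)) := hint2'.sub hint3
    rw [setIntegral_congr_fun measurableSet_Ioi hpt, integral_const_mul,
      integral_add hint1' hint23, integral_const_mul, integral_sub hint2' hint3,
      integral_const_mul, gammaPow_value m, gammaLog_value m, gammaPow_value (m + 1)]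
  -- put it together
  have hLHS : (∫ z : ℂ, F ‖z‖) = 2 * (π * ((1 / (2 * c)) * ∫ t in Set.Ioi (0:ℝ), g t)) := by
    rw [step1, step2']
  rw [show (∫ z : ℂ,
        ((1 - x) ^ (m + 1) / (m.factorial : ℝ) * ‖z‖ ^ (2 * m)
            * Real.exp (-(1 - x) * ‖z‖ ^ 2)) *
          Real.log ((1 - x) ^ (m + 1) / (m.factorial : ℝ) * ‖z‖ ^ (2 * m)
            * Real.exp (-(1 - x) * ‖z‖ ^ 2))) = ∫ z : ℂ, F ‖z‖ from rfl,
    hLHS, hg_val]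
  have hlogdiv : Real.log (c / (m.factorial : ℝ)) = Real.log c - Real.log (m.factorial : ℝ) :=
    Real.log_div hc.ne' hm.ne'
  have hfact : ((m + 1).factorial : ℝ) = ((m : ℝ) + 1) * (m.factorial : ℝ) := by
    rw [Nat.factorial_succ]; push_cast; ring
  rw [hlogdiv, hfact]
  have hπ : π ≠ 0 := Real.pi_ne_zero
  field_simp
  ring
end
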